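/- Let (X_{i,j})_{i,j≥1} be an infinite array of i.i.d. nonnegative real random variables with mean E(X_{1,1}) = 1 and finite positive variance σ². Then for every z ∈ ℂ, almost surely lim_{t→∞} limsup_{n→∞} ∫_t^∞ log(s) dν_{√n M − zI}(ds) = 0; that is, the function 1_{[1,∞)} log(·) is uniformly integrable for the sequence (ν_{√n M − zI})_{n≥1}. -/

import Mathlib

open MeasureTheory ProbabilityTheory Filter Matrix Polynomial Topology
open scoped ENNReal

noncomputable section

/-- Unsorted singular values of `A`: the square roots of the eigenvalues of `A * Aᴴ`. -/
def singVals {n : ℕ} (A : Matrix (Fin n) (Fin n) ℂ) : Fin n → ℝ :=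
  fun i => Real.sqrt ((Matrix.isHermitian_mul_conjTranspose_self A).eigenvalues i)

/-- The singular values of `A` sorted in nonincreasing order. -/
def sdesc {n : ℕ} (A : Matrix (Fin n) (Fin n) ℂ) : Fin n → ℝ :=
  fun i => (singVals A ∘ Tuple.sort (singVals A)) i.rev

/-- `sv A k` is the `(k+1)`-th largest singular value `s_{k+1}(A)` of `A`
(i.e. 0-based indexing: `sv A 0 = s₁(A)`, …, `sv A (n-1) = sₙ(A)`), junk value `0` out of range. -/
def sv {n : ℕ} (A : Matrix (Fin n) (Fin n) ℂ) (k : ℕ) : ℝ :=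
  if h : k < n then sdesc A ⟨k, h⟩ else 0

/-- Empirical singular value distribution `ν_A`. -/
def empSV {n : ℕ} (A : Matrix (Fin n) (Fin n) ℂ) : Measure ℝ :=
  (n : ℝ≥0∞)⁻¹ • ∑ i : Fin n, Measure.dirac (singVals A i)

/-- Empirical eigenvalue distribution `μ_A`: uniform measure on the roots (with multiplicity)
of the characteristic polynomial of `A`. -/
def empEig {n : ℕ} (A : Matrix (Fin n) (Fin n) ℂ) : Measure ℂ :=
  (n : ℝ≥0∞)⁻¹ • ((A.charpoly.roots.map Measure.dirac).sum)

variable {Ω : Type} [MeasurableSpace Ω]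

/-- The random `n×n` Markov matrix `M` built from the array `X`:
`M i j = X i j / (row sum)` when the row sum is positive, and `M i j = δ_{ij}` otherwise. -/
def markov (X : ℕ → ℕ → Ω → ℝ) (n : ℕ) (ω : Ω) : Matrix (Fin n) (Fin n) ℝ :=
  Matrix.of fun i j =>
    if 0 < ∑ k : Fin n, X i k ω then X i j ω / ∑ k : Fin n, X i k ω
    else if i = j then 1 else 0

/-- The Markov matrix `M`, viewed as a complex matrix. -/
def markC (X : ℕ → ℕ → Ω → ℝ) (n : ℕ) (ω : Ω) : Matrix (Fin n) (Fin n) ℂ :=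
  (markov X n ω).map (fun x => (x : ℂ))

/-- The matrix `√n M`, viewed as a complex matrix. -/
def sqnM (X : ℕ → ℕ → Ω → ℝ) (n : ℕ) (ω : Ω) : Matrix (Fin n) (Fin n) ℂ :=
  (Real.sqrt n : ℂ) • markC X n ω

/-- The matrix `n^{-1/2} X`, viewed as a complex matrix. -/
def sqnX (X : ℕ → ℕ → Ω → ℝ) (n : ℕ) (ω : Ω) : Matrix (Fin n) (Fin n) ℂ :=
  ((Real.sqrt n : ℂ))⁻¹ • Matrix.of (fun i j : Fin n => (X i j ω : ℂ))

section AuxLemmas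

lemma aux_exp_neg_le {y : ℝ} (hy : 0 ≤ y) : Real.exp (-y) ≤ 1 - y + y ^ 2 := by
  have h1 : (1 : ℝ) + y ≤ Real.exp y := by linarith [Real.add_one_le_exp y]
  have h2 : (0:ℝ) < 1 + y := by linarith
  have h3 : Real.exp (-y) = (Real.exp y)⁻¹ := Real.exp_neg y
  have h4 : (Real.exp y)⁻¹ ≤ (1 + y)⁻¹ := by
    apply inv_anti₀ h2 h1
  have h5 : (1 + y)⁻¹ ≤ 1 - y + y ^ 2 := by
    rw [inv_le_iff_one_le_mul₀ h2]
    nlinarith [pow_nonneg hy 3]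
  linarith [h3 ▸ h4]

lemma aux_sum_unpair (f : ℕ → ℕ → ℝ) (n : ℕ) :
    ∑ k ∈ Finset.range (n * n), f (Nat.unpair k).1 (Nat.unpair k).2
      = ∑ i ∈ Finset.range n, ∑ j ∈ Finset.range n, f i j := by
  rw [← Finset.sum_product']
  apply Finset.sum_nbij' (i := fun k => Nat.unpair k) (j := fun p => Nat.pair p.1 p.2)
  · intro k hk
    simp only [Finset.mem_range] at hk
    simp only [Finset.mem_product, Finset.mem_range]
    have h := Nat.max_sq_add_min_le_pair (Nat.unpair k).1 (Nat.unpair k).2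
    rw [Nat.pair_unpair] at h
    have hmax : max (Nat.unpair k).1 (Nat.unpair k).2 < n := by
      by_contra hc
      push_neg at hc
      have : n * n ≤ max (Nat.unpair k).1 (Nat.unpair k).2 ^ 2 := by
        rw [pow_two]; exact Nat.mul_le_mul hc hc
      omega
    exact ⟨lt_of_le_of_lt (le_max_left _ _) hmax, lt_of_le_of_lt (le_max_right _ _) hmax⟩
  · intro p hp
    simp only [Finset.mem_product, Finset.mem_range] at hp
    simp only [Finset.mem_range]
    calc Nat.pair p.1 p.2 < (max p.1 p.2 + 1) ^ 2 := Nat.pair_lt_max_add_one_sq _ _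
    _ ≤ n ^ 2 := by
        apply Nat.pow_le_pow_left
        omega
    _ = n * n := by rw [pow_two]
  · intro k _; exact Nat.pair_unpair k
  · intro p _; exact Nat.unpair_pair p.1 p.2
  · intro k _; rfl

lemma aux_precomp {Ω' ι ι' : Type*} {β : Type*} [MeasurableSpace Ω'] [mβ : MeasurableSpace β]
    {μ : Measure Ω'} [IsProbabilityMeasure μ] {f : ι → Ω' → β} (g : ι' → ι)
    (hg : Function.Injective g)
    (h : iIndepFun f μ) : iIndepFun (fun i => f (g i)) μ := by
  rw [iIndepFun_iff_measure_inter_preimage_eq_mul] at h ⊢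
  intro S sets hsets
  rcases S.eq_empty_or_nonempty with rfl | ⟨i₀, hi₀⟩
  · simp
  haveI : Nonempty ι' := ⟨i₀⟩
  classical
  have hinv : ∀ i : ι', Function.invFun g (g i) = i := fun i => Function.leftInverse_invFun hg i
  have key := h (S.image g) (sets := fun j => sets (Function.invFun g j)) (fun j hj => by
    obtain ⟨i, hi, rfl⟩ := Finset.mem_image.mp hj
    simp only [hinv i]; exact hsets i hi)
  rw [Finset.prod_image (fun i _ j _ hij => hg hij)] at key
  have h2 : (⋂ j ∈ S.image g, f j ⁻¹' sets (Function.invFun g j))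
      = ⋂ i ∈ S, f (g i) ⁻¹' sets i := by
    rw [Finset.set_biInter_finset_image]
    exact Set.iInter₂_congr fun i hi => by rw [hinv i]
  rw [h2] at key
  rw [key]
  exact Finset.prod_congr rfl fun i hi => by simp only [hinv i]

lemma aux_chernoff {Ω' : Type*} [MeasurableSpace Ω'] (μ : Measure Ω')
    [IsProbabilityMeasure μ]
    {n : ℕ} (Y : Fin n → Ω' → ℝ) (hmeas : ∀ j, Measurable (Y j))
    (hnonneg : ∀ j ω, 0 ≤ Y j ω)
    (hindep : iIndepFun Y μ)
    {m₂ : ℝ} (hm₂ : 1 ≤ m₂)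
    (hmean : ∀ j, ∫ ω, Y j ω ∂μ = 1)
    (hsq : ∀ j, ∫ ω, (Y j ω)^2 ∂μ ≤ m₂)
    (hint1 : ∀ j, Integrable (Y j) μ) (hint2 : ∀ j, Integrable (fun ω => (Y j ω)^2) μ) :
    (μ {ω | ∑ j, Y j ω ≤ (n:ℝ)/2}).toReal ≤ Real.exp (-(n:ℝ)/(16*m₂)) := by
  have hm₂pos : (0:ℝ) < m₂ := lt_of_lt_of_le one_pos hm₂
  set s : ℝ := 1/(4*m₂) with hs_def
  have hs : 0 < s := by positivity
  set t : ℝ := -s with ht_def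
  have ht : t ≤ 0 := by simp [ht_def, hs.le]
  have hint_exp : ∀ j : Fin n, Integrable (fun ω => Real.exp (t * Y j ω)) μ := by
    intro j
    apply Integrable.mono' (integrable_const (1:ℝ))
      (((hmeas j).const_mul t).exp.aestronglyMeasurable)
    filter_upwards with ω
    rw [Real.norm_eq_abs, abs_of_pos (Real.exp_pos _)]
    apply Real.exp_le_one_iff.mpr
    exact mul_nonpos_of_nonpos_of_nonneg (by simpa [ht_def] using hs.le) (hnonneg j ω)
  have hsum_int : Integrable (fun ω => Real.exp (t * (∑ j, Y j) ω)) μ :=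
    hindep.integrable_exp_mul_sum hmeas (fun j _ => hint_exp j)
  have chern := measure_le_le_exp_mul_mgf (μ := μ) (X := ∑ j, Y j) ((n:ℝ)/2) ht hsum_int
  have hset : {ω | (∑ j, Y j) ω ≤ (n:ℝ)/2} = {ω | ∑ j, Y j ω ≤ (n:ℝ)/2} := by
    ext ω; simp [Finset.sum_apply]
  rw [hset] at chern
  have hmgf_j : ∀ j : Fin n, mgf (Y j) μ t ≤ Real.exp (-s + s^2 * m₂) := by
    intro j
    have hb : ∀ ω, Real.exp (t * Y j ω) ≤ 1 - s * Y j ω + s^2 * (Y j ω)^2 := by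
      intro ω
      have h := aux_exp_neg_le (mul_nonneg hs.le (hnonneg j ω))
      calc Real.exp (t * Y j ω) = Real.exp (-(s * Y j ω)) := by rw [ht_def]; ring_nf
      _ ≤ 1 - s * Y j ω + (s * Y j ω)^2 := h
      _ = 1 - s * Y j ω + s^2 * (Y j ω)^2 := by ring
    have hint_rhs : Integrable (fun ω => 1 - s * Y j ω + s^2 * (Y j ω)^2) μ := by
      apply Integrable.add
      apply Integrable.sub (integrable_const 1) ((hint1 j).const_mul s)
      exact (hint2 j).const_mul (s^2)
    have h1 : mgf (Y j) μ t ≤ ∫ ω, (1 - s * Y j ω + s^2 * (Y j ω)^2) ∂μ :=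
      integral_mono (hint_exp j) hint_rhs (fun ω => hb ω)
    have h2 : ∫ ω, (1 - s * Y j ω + s^2 * (Y j ω)^2) ∂μ = 1 - s + s^2 * ∫ ω, (Y j ω)^2 ∂μ := by
      have e1 : Integrable (fun ω => s * Y j ω) μ := by
        exact (hint1 j).const_mul s
      have e2 : Integrable (fun ω => s^2 * (Y j ω)^2) μ := by
        exact (hint2 j).const_mul (s^2)
      have e0 : Integrable (fun ω => 1 - s * Y j ω) μ := by
        exact (integrable_const 1).sub e1
      rw [integral_add e0 e2, integral_sub (integrable_const 1) e1,
        integral_const, integral_const_mul, integral_const_mul, hmean j]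
      simp
    have h3 : 1 - s + s^2 * ∫ ω, (Y j ω)^2 ∂μ ≤ 1 + (-s + s^2 * m₂) := by
      have := hsq j
      nlinarith [sq_nonneg s]
    calc mgf (Y j) μ t ≤ 1 + (-s + s^2 * m₂) := by linarith [h1, h2 ▸ h1, h3]
    _ ≤ Real.exp (-s + s^2 * m₂) := by linarith [Real.add_one_le_exp (-s + s^2*m₂)]
  have hprod : mgf (∑ j, Y j) μ t ≤ Real.exp (-s + s^2 * m₂) ^ n := by
    rw [hindep.mgf_sum hmeas Finset.univ]
    calc ∏ j, mgf (Y j) μ t ≤ ∏ _j : Fin n, Real.exp (-s + s^2 * m₂) :=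
      Finset.prod_le_prod (fun j _ => mgf_nonneg) (fun j _ => hmgf_j j)
    _ = Real.exp (-s + s^2 * m₂) ^ n := by
        rw [Finset.prod_const, Finset.card_univ, Fintype.card_fin]
  calc (μ {ω | ∑ j, Y j ω ≤ (n:ℝ)/2}).toReal
      ≤ Real.exp (-t * ((n:ℝ)/2)) * mgf (∑ j, Y j) μ t := chern
    _ ≤ Real.exp (-t * ((n:ℝ)/2)) * Real.exp (-s + s^2 * m₂) ^ n := by
        apply mul_le_mul_of_nonneg_left hprod (Real.exp_pos _).le
    _ = Real.exp (-(n:ℝ)/(16*m₂)) := by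
        rw [← Real.exp_nat_mul, ← Real.exp_add]
        congr 1
        rw [ht_def, hs_def]
        field_simp
        ring

lemma aux_trace_eq {n : ℕ} {A : Matrix (Fin n) (Fin n) ℂ} (hA : A.IsHermitian) :
    A.trace = ∑ i, (hA.eigenvalues i : ℂ) := by
  exact hA.trace_eq_sum_eigenvalues

lemma aux_sum_sq_singVals {n : ℕ} (A : Matrix (Fin n) (Fin n) ℂ) :
    ∑ i, (singVals A i) ^ 2 = ∑ i, ∑ j, Complex.normSq (A i j) := by
  have hA := Matrix.isHermitian_mul_conjTranspose_self A
  have h1 : ∀ i, (singVals A i) ^ 2 = hA.eigenvalues i := fun i =>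
    Real.sq_sqrt (Matrix.eigenvalues_self_mul_conjTranspose_nonneg A i)
  have h0 : ∑ i, (singVals A i) ^ 2 = ∑ i, hA.eigenvalues i :=
    Finset.sum_congr rfl fun i _ => h1 i
  have h2 : (A * Aᴴ).trace = ((∑ i, ∑ j, Complex.normSq (A i j) : ℝ) : ℂ) := by
    rw [Matrix.trace]
    push_cast
    apply Finset.sum_congr rfl
    intro i _
    simp [Matrix.diag_apply, Matrix.mul_apply, Matrix.conjTranspose_apply, Complex.mul_conj]
  have h3 : ((∑ i, (singVals A i)^2 : ℝ) : ℂ) = ((∑ i, ∑ j, Complex.normSq (A i j) : ℝ) : ℂ) := by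
    rw [h0, ← h2, aux_trace_eq hA]
    push_cast
    rfl
  exact_mod_cast h3

lemma aux_empSV_integral {n : ℕ} (A : Matrix (Fin n) (Fin n) ℂ)
    (g : ℝ → ℝ) (hg : Measurable g) :
    ∫ s, g s ∂(empSV A) = (n:ℝ)⁻¹ * ∑ i, g (singVals A i) := by
  rw [empSV, MeasureTheory.integral_smul_measure,
    MeasureTheory.integral_finset_sum_measure (fun i _ => ?_)]
  · simp only [MeasureTheory.integral_dirac]
    rw [ENNReal.toReal_inv, smul_eq_mul]
    simp
  · refine ⟨hg.aestronglyMeasurable, ?_⟩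
    simp [MeasureTheory.HasFiniteIntegral, MeasureTheory.lintegral_dirac]

lemma aux_normSq_sub (a b : ℂ) :
    Complex.normSq (a - b) ≤ 2 * Complex.normSq a + 2 * Complex.normSq b := by
  simp only [Complex.normSq_apply, Complex.sub_re, Complex.sub_im]
  nlinarith [sq_nonneg (a.re + b.re), sq_nonneg (a.im + b.im), sq_nonneg (a.re - b.re),
    sq_nonneg (a.im - b.im)]

end AuxLemmas

/-- For every `z`, a.s. `lim_{t→∞} limsup_n ∫_t^∞ log s dν_{√n M − zI}(ds) = 0`, i.e.
`1_{[1,∞)} log` is uniformly integrable for the empirical singular value distributions. -/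
theorem log_uniform_integrability_at_infinity
    (μ : Measure Ω) [IsProbabilityMeasure μ]
    (X : ℕ → ℕ → Ω → ℝ) (σ : ℝ) (hσ : 0 < σ)
    (h_nonneg : ∀ i j ω, 0 ≤ X i j ω)
    (h_meas : ∀ i j, Measurable (X i j))
    (h_indep : iIndepFun (fun p : ℕ × ℕ => X p.1 p.2) μ)
    (h_ident : ∀ i j, IdentDistrib (X i j) (X 0 0) μ μ)
    (h_L2 : MemLp (X 0 0) 2 μ)
    (h_mean : ∫ ω, X 0 0 ω ∂μ = 1)
    (h_var : variance (X 0 0) μ = σ ^ 2) :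
    ∀ z : ℂ, ∀ᵐ ω ∂μ,
      Tendsto (fun t : ℝ =>
          limsup (fun n : ℕ =>
            ∫ s in Set.Ici t, Real.log s ∂(empSV (sqnM X n ω - z • 1))) atTop)
        atTop (𝓝 0) := by
  intro z
  -- basic moment facts
  have hmeas_sq : Measurable fun x : ℝ => x ^ 2 := measurable_id.pow_const 2
  have hX00sq_int : Integrable (fun ω => (X 0 0 ω) ^ 2) μ := h_L2.integrable_sq
  have hX00_int : Integrable (X 0 0) μ := h_L2.integrable one_le_two
  set m₂ : ℝ := σ ^ 2 + 1 with hm₂_def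
  have hm₂1 : (1:ℝ) ≤ m₂ := by nlinarith [sq_nonneg σ]
  have hm₂pos : (0:ℝ) < m₂ := lt_of_lt_of_le one_pos hm₂1
  have hsq_eq : ∫ ω, (X 0 0 ω) ^ 2 ∂μ = m₂ := by
    have hv := variance_eq_sub h_L2
    rw [h_var, h_mean] at hv
    have h' : (μ[(X 0 0) ^ 2] : ℝ) = ∫ ω, (X 0 0 ω) ^ 2 ∂μ := by
      apply integral_congr_ae
      filter_upwards with ω
      simp [pow_two]
    rw [h'] at hv
    rw [hm₂_def]
    linarith
  have hident_sq : ∀ i j : ℕ, IdentDistrib (fun ω => (X i j ω) ^ 2)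
      (fun ω => (X 0 0 ω) ^ 2) μ μ := fun i j => (h_ident i j).comp hmeas_sq
  have hint_ij : ∀ i j : ℕ, Integrable (X i j) μ :=
    fun i j => (h_ident i j).integrable_iff.mpr hX00_int
  have hintsq_ij : ∀ i j : ℕ, Integrable (fun ω => (X i j ω) ^ 2) μ :=
    fun i j => (hident_sq i j).integrable_iff.mpr hX00sq_int
  have hmean_ij : ∀ i j : ℕ, ∫ ω, X i j ω ∂μ = 1 :=
    fun i j => by rw [(h_ident i j).integral_eq]; exact h_mean
  have hsqint_ij : ∀ i j : ℕ, ∫ ω, (X i j ω) ^ 2 ∂μ = m₂ :=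
    fun i j => by rw [(hident_sq i j).integral_eq]; exact hsq_eq
  -- Borel–Cantelli: eventually all row sums exceed n/2
  set E : ℕ → Set Ω := fun n => ⋃ i : Fin n, {ω | ∑ k : Fin n, X i k ω ≤ (n:ℝ)/2} with hE_def
  have hrow_indep : ∀ n : ℕ, ∀ i : Fin n,
      iIndepFun (fun j : Fin n => X i j) μ := by
    intro n i
    have hginj : Function.Injective (fun j : Fin n => (((i:ℕ), (j:ℕ)) : ℕ × ℕ)) := by
      intro a b hab
      simp only [Prod.mk.injEq] at hab
      exact Fin.val_injective hab.2
    exact aux_precomp (f := fun p : ℕ × ℕ => X p.1 p.2) _ hginj h_indep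
  have hEbound : ∀ n : ℕ, μ (E n) ≤ ENNReal.ofReal ((n:ℝ) * Real.exp (-(n:ℝ)/(16*m₂))) := by
    intro n
    calc μ (E n) ≤ ∑ i : Fin n, μ {ω | ∑ k : Fin n, X i k ω ≤ (n:ℝ)/2} :=
      measure_iUnion_fintype_le μ _
    _ ≤ ∑ _i : Fin n, ENNReal.ofReal (Real.exp (-(n:ℝ)/(16*m₂))) := by
        apply Finset.sum_le_sum; intro i _
        rw [ENNReal.le_ofReal_iff_toReal_le (measure_ne_top μ _) (Real.exp_pos _).le]
        exact aux_chernoff μ (fun j : Fin n => X i j) (fun j => h_meas i j)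
          (fun j ω => h_nonneg i j ω) (hrow_indep n i) hm₂1 (fun j => hmean_ij i j)
          (fun j => (hsqint_ij i j).le) (fun j => hint_ij i j) (fun j => hintsq_ij i j)
    _ = ENNReal.ofReal ((n:ℝ) * Real.exp (-(n:ℝ)/(16*m₂))) := by
        rw [Finset.sum_const, Finset.card_univ, Fintype.card_fin, nsmul_eq_mul,
          ← ENNReal.ofReal_natCast n, ← ENNReal.ofReal_mul (by positivity)]
  have hsummable : Summable (fun n : ℕ => (n:ℝ) * Real.exp (-(n:ℝ)/(16*m₂))) := by
    have hr : ‖Real.exp (-(1/(16*m₂)))‖ < 1 := by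
      have h16 : (0:ℝ) < 1/(16*m₂) := by positivity
      rw [Real.norm_eq_abs, abs_of_pos (Real.exp_pos _)]
      apply Real.exp_lt_one_iff.mpr
      linarith
    apply Summable.congr (summable_pow_mul_geometric_of_norm_lt_one 1 hr)
    intro n
    rw [pow_one, ← Real.exp_nat_mul]
    have he : (n:ℝ) * -(1/(16*m₂)) = -(n:ℝ)/(16*m₂) := by field_simp
    rw [he]
  have hBC : ∀ᵐ ω ∂μ, ∀ᶠ n in atTop, ω ∉ E n := by
    apply MeasureTheory.ae_eventually_notMem
    have hle : ∑' n, μ (E n) ≤ ∑' n : ℕ, ENNReal.ofReal ((n:ℝ) * Real.exp (-(n:ℝ)/(16*m₂))) :=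
      ENNReal.tsum_le_tsum hEbound
    rw [← ENNReal.ofReal_tsum_of_nonneg (fun n => by positivity) hsummable] at hle
    exact ne_top_of_le_ne_top ENNReal.ofReal_ne_top hle
  -- SLLN for the array of squares
  set Y : ℕ → Ω → ℝ := fun k ω => (X (Nat.unpair k).1 (Nat.unpair k).2 ω) ^ 2 with hY_def
  have hY0 : Y 0 = fun ω => (X 0 0 ω) ^ 2 := by
    simp [hY_def]
  have hSLLN : ∀ᵐ ω ∂μ,
      Tendsto (fun N : ℕ => (∑ k ∈ Finset.range N, Y k ω) / N) atTop (𝓝 m₂) := by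
    have hintY : Integrable (Y 0) μ := by rw [hY0]; exact hX00sq_int
    have hindepY : Pairwise (Function.onFun (IndepFun · · μ) Y) := by
      intro k l hkl
      have hne : (Nat.unpair k) ≠ (Nat.unpair l) := fun h =>
        hkl (by rw [← Nat.pair_unpair k, ← Nat.pair_unpair l, h])
      exact (h_indep.indepFun hne).comp hmeas_sq hmeas_sq
    have hidentY : ∀ k, IdentDistrib (Y k) (Y 0) μ μ := by
      intro k; rw [hY0]; exact hident_sq _ _
    have h := strong_law_ae_real Y hintY hindepY hidentY
    have hmu : (μ[Y 0] : ℝ) = m₂ := by rw [hY0]; exact hsq_eq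
    rw [hmu] at h
    exact h
  filter_upwards [hBC, hSLLN] with ω hA hB
  -- deterministic part
  set C : ℝ := 4 * (m₂ + 1) with hC_def
  have hCpos : 0 < C := by positivity
  set K : ℝ := 2 * C + 2 * Complex.normSq z with hK_def
  have hKnonneg : 0 ≤ K := by nlinarith [Complex.normSq_nonneg z, hCpos]
  have hrow : ∀ᶠ n : ℕ in atTop, ∀ i : Fin n, (n:ℝ)/2 < ∑ k : Fin n, X i k ω := by
    filter_upwards [hA] with n hn
    intro i
    by_contra hle
    push_neg at hle
    exact hn (Set.mem_iUnion.mpr ⟨i, hle⟩)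
  have h_n2 : Tendsto (fun n : ℕ => n * n) atTop atTop := by
    apply tendsto_atTop_mono (fun n => ?_) tendsto_id
    show id n ≤ n * n
    rcases Nat.eq_zero_or_pos n with rfl | hp
    · simp
    · simpa using Nat.le_mul_of_pos_left n hp
  have hsum2 : ∀ᶠ n : ℕ in atTop,
      ∑ i ∈ Finset.range n, ∑ j ∈ Finset.range n, (X i j ω) ^ 2 ≤ (m₂+1) * ((n:ℝ) * n) := by
    have hcomp : Tendsto (fun n : ℕ => (∑ k ∈ Finset.range (n*n), Y k ω) / ((n*n : ℕ):ℝ))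
        atTop (𝓝 m₂) := hB.comp h_n2
    have hev := hcomp.eventually_lt_const (show m₂ < m₂ + 1 by linarith)
    filter_upwards [hev, eventually_ge_atTop 1] with n hn hn1
    have hnpos : (0:ℝ) < (n:ℝ) * n := by
      have : (1:ℝ) ≤ (n:ℝ) := by exact_mod_cast hn1
      nlinarith
    have hsum_eq : ∑ k ∈ Finset.range (n*n), Y k ω
        = ∑ i ∈ Finset.range n, ∑ j ∈ Finset.range n, (X i j ω) ^ 2 := by
      simp only [hY_def]
      exact aux_sum_unpair (fun i j => (X i j ω) ^ 2) n
    rw [hsum_eq] at hn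
    push_cast at hn
    rw [div_lt_iff₀ hnpos] at hn
    linarith
  have hfrob : ∀ᶠ n : ℕ in atTop,
      ∑ i : Fin n, ∑ j : Fin n, (markov X n ω i j) ^ 2 ≤ C := by
    filter_upwards [hrow, hsum2, eventually_ge_atTop 1] with n hr hs hn1
    have hn1' : (1:ℝ) ≤ (n:ℝ) := by exact_mod_cast hn1
    have hnpos : (0:ℝ) < n := by linarith
    have hstep : ∀ i j : Fin n, (markov X n ω i j) ^ 2 ≤ (X i j ω) ^ 2 * (4/(n:ℝ)^2) := by
      intro i j
      have hρ := hr i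
      have hρpos : (0:ℝ) < ∑ k : Fin n, X i k ω := lt_trans (by positivity) hρ
      have hentry : markov X n ω i j = X i j ω / ∑ k : Fin n, X i k ω := by
        rw [markov, Matrix.of_apply, if_pos hρpos]
      rw [hentry, div_pow]
      have h1 : (n:ℝ)^2/4 < (∑ k : Fin n, X i k ω)^2 := by nlinarith
      calc (X i j ω)^2 / (∑ k : Fin n, X i k ω)^2
          ≤ (X i j ω)^2 / ((n:ℝ)^2/4) := by
            apply div_le_div_of_nonneg_left (sq_nonneg _) (by positivity) h1.le
      _ = (X i j ω)^2 * (4/(n:ℝ)^2) := by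
            field_simp
    calc ∑ i : Fin n, ∑ j : Fin n, (markov X n ω i j) ^ 2
        ≤ ∑ i : Fin n, ∑ j : Fin n, (X i j ω) ^ 2 * (4/(n:ℝ)^2) :=
          Finset.sum_le_sum fun i _ => Finset.sum_le_sum fun j _ => hstep i j
    _ = (∑ i : Fin n, ∑ j : Fin n, (X i j ω) ^ 2) * (4/(n:ℝ)^2) := by
        rw [Finset.sum_mul]
        exact Finset.sum_congr rfl fun i _ => by rw [Finset.sum_mul]
    _ = (∑ i ∈ Finset.range n, ∑ j ∈ Finset.range n, (X i j ω) ^ 2) * (4/(n:ℝ)^2) := by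
        congr 1
        rw [Fin.sum_univ_eq_sum_range (fun i => ∑ j : Fin n, (X i j ω) ^ 2)]
        exact Finset.sum_congr rfl fun i _ =>
          Fin.sum_univ_eq_sum_range (fun j => (X i j ω) ^ 2) n
    _ ≤ ((m₂+1) * ((n:ℝ) * n)) * (4/(n:ℝ)^2) := by
        apply mul_le_mul_of_nonneg_right hs (by positivity)
    _ = C := by
        rw [hC_def]
        field_simp
  -- Frobenius norm bound for the shifted matrix
  have hnormSq : ∀ᶠ n : ℕ in atTop,
      (n:ℝ)⁻¹ * ∑ i : Fin n, ∑ j : Fin n,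
        Complex.normSq ((sqnM X n ω - z • 1) i j) ≤ K := by
    filter_upwards [hfrob, eventually_ge_atTop 1] with n hf hn1
    have hn1' : (1:ℝ) ≤ (n:ℝ) := by exact_mod_cast hn1
    have hnpos : (0:ℝ) < n := by linarith
    have hentry : ∀ i j : Fin n, Complex.normSq ((sqnM X n ω - z • 1) i j)
        ≤ 2 * ((n:ℝ) * (markov X n ω i j)^2) + 2 * (if i = j then Complex.normSq z else 0) := by
      intro i j
      have he : (sqnM X n ω - z • 1) i j
          = ((Real.sqrt n : ℂ)) * ((markov X n ω i j : ℝ) : ℂ)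
            - z * (if i = j then 1 else 0) := by
        simp [sqnM, markC, Matrix.sub_apply, Matrix.smul_apply, Matrix.map_apply,
          Matrix.one_apply, smul_eq_mul, mul_ite, mul_one, mul_zero]
      rw [he]
      have h1 : Complex.normSq ((Real.sqrt n : ℂ) * ((markov X n ω i j : ℝ) : ℂ))
          = (n:ℝ) * (markov X n ω i j)^2 := by
        rw [Complex.normSq_mul, Complex.normSq_ofReal, Complex.normSq_ofReal,
          Real.mul_self_sqrt (by positivity)]
        ring
      have h2 : Complex.normSq (z * (if i = j then (1:ℂ) else 0))
          = (if i = j then Complex.normSq z else 0) := by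
        by_cases hij : i = j <;> simp [hij]
      calc Complex.normSq (_ - _) ≤ 2 * Complex.normSq _ + 2 * Complex.normSq _ :=
        aux_normSq_sub _ _
      _ = 2 * ((n:ℝ) * (markov X n ω i j)^2) + 2 * (if i = j then Complex.normSq z else 0) := by
        rw [h1, h2]
    have hsum : ∑ i : Fin n, ∑ j : Fin n, Complex.normSq ((sqnM X n ω - z • 1) i j)
        ≤ 2 * (n:ℝ) * C + 2 * (n:ℝ) * Complex.normSq z := by
      calc ∑ i : Fin n, ∑ j : Fin n, Complex.normSq ((sqnM X n ω - z • 1) i j)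
          ≤ ∑ i : Fin n, ∑ j : Fin n, (2 * ((n:ℝ) * (markov X n ω i j)^2)
              + 2 * (if i = j then Complex.normSq z else 0)) :=
            Finset.sum_le_sum fun i _ => Finset.sum_le_sum fun j _ => hentry i j
      _ = 2 * (n:ℝ) * (∑ i : Fin n, ∑ j : Fin n, (markov X n ω i j)^2)
            + 2 * (n:ℝ) * Complex.normSq z := by
          rw [Finset.sum_congr rfl (fun i _ => Finset.sum_add_distrib)]
          rw [Finset.sum_add_distrib]
          congr 1
          · rw [Finset.mul_sum]
            apply Finset.sum_congr rfl
            intro i _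
            rw [Finset.mul_sum]
            apply Finset.sum_congr rfl
            intro j _
            ring
          · calc ∑ i : Fin n, ∑ j : Fin n, 2 * (if i = j then Complex.normSq z else 0)
                = ∑ _i : Fin n, 2 * Complex.normSq z := by
                  apply Finset.sum_congr rfl
                  intro i _
                  rw [← Finset.mul_sum]
                  simp [Finset.sum_ite_eq]
            _ = 2 * (n:ℝ) * Complex.normSq z := by
                  rw [Finset.sum_const, Finset.card_univ, Fintype.card_fin, nsmul_eq_mul]
                  ring
      _ ≤ 2 * (n:ℝ) * C + 2 * (n:ℝ) * Complex.normSq z := by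
          have := hf
          nlinarith
    calc (n:ℝ)⁻¹ * ∑ i : Fin n, ∑ j : Fin n, Complex.normSq ((sqnM X n ω - z • 1) i j)
        ≤ (n:ℝ)⁻¹ * (2 * (n:ℝ) * C + 2 * (n:ℝ) * Complex.normSq z) := by
          apply mul_le_mul_of_nonneg_left hsum (by positivity)
    _ = K := by
        rw [hK_def]
        field_simp
  -- key bounds on the truncated log integrals
  have key : ∀ t : ℝ, 1 ≤ t → ∀ᶠ n : ℕ in atTop,
      0 ≤ (∫ s in Set.Ici t, Real.log s ∂(empSV (sqnM X n ω - z • 1))) ∧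
      (∫ s in Set.Ici t, Real.log s ∂(empSV (sqnM X n ω - z • 1))) ≤ K / t := by
    intro t ht
    have ht0 : (0:ℝ) < t := by linarith
    filter_upwards [hnormSq, eventually_ge_atTop 1] with n hn hn1
    set A := sqnM X n ω - z • 1 with hA_def
    have hform : (∫ s in Set.Ici t, Real.log s ∂(empSV A))
        = (n:ℝ)⁻¹ * ∑ i, ((Set.Ici t).indicator Real.log) (singVals A i) := by
      rw [← MeasureTheory.integral_indicator measurableSet_Ici]
      exact aux_empSV_integral A _ (Real.measurable_log.indicator measurableSet_Ici)
    constructor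
    · rw [hform]
      apply mul_nonneg (by positivity)
      apply Finset.sum_nonneg
      intro i _
      apply Set.indicator_nonneg
      intro s hs
      exact Real.log_nonneg (le_trans ht hs)
    · rw [hform]
      have hterm : ∀ i, ((Set.Ici t).indicator Real.log) (singVals A i)
          ≤ (singVals A i)^2 / t := by
        intro i
        have hs0 : 0 ≤ singVals A i := Real.sqrt_nonneg _
        by_cases hmem : singVals A i ∈ Set.Ici t
        · rw [Set.indicator_of_mem hmem]
          have hts : t ≤ singVals A i := hmem
          have h1 : Real.log (singVals A i) ≤ singVals A i :=
            (Real.log_le_sub_one_of_pos (by linarith)).trans (by linarith)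
          have h2 : singVals A i ≤ (singVals A i)^2 / t := by
            rw [le_div_iff₀ ht0]
            nlinarith
          linarith
        · rw [Set.indicator_of_notMem hmem]
          positivity
      calc (n:ℝ)⁻¹ * ∑ i, ((Set.Ici t).indicator Real.log) (singVals A i)
          ≤ (n:ℝ)⁻¹ * ∑ i, (singVals A i)^2 / t := by
            apply mul_le_mul_of_nonneg_left (Finset.sum_le_sum fun i _ => hterm i)
              (by positivity)
      _ = ((n:ℝ)⁻¹ * ∑ i, (singVals A i)^2) / t := by
            rw [← Finset.sum_div]
            ring
      _ = ((n:ℝ)⁻¹ * ∑ i, ∑ j, Complex.normSq (A i j)) / t := by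
            rw [aux_sum_sq_singVals]
      _ ≤ K / t := by
            exact (div_le_div_iff_of_pos_right ht0).mpr hn
  -- conclude by squeezing
  apply tendsto_of_tendsto_of_tendsto_of_le_of_le'
    (g := fun _ : ℝ => (0:ℝ)) (h := fun t : ℝ => K / t) tendsto_const_nhds
    (Tendsto.div_atTop tendsto_const_nhds tendsto_id)
  · filter_upwards [eventually_ge_atTop (1:ℝ)] with t ht
    have hk := key t ht
    exact le_limsup_of_frequently_le ((hk.mono fun n h => h.1).frequently)
      (isBoundedUnder_of_eventually_le (hk.mono fun n h => h.2))
  · filter_upwards [eventually_ge_atTop (1:ℝ)] with t ht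
    have hk := key t ht
    exact limsup_le_of_le
      (isCoboundedUnder_le_of_eventually_le atTop (hk.mono fun n h => h.1))
      (hk.mono fun n h => h.2)
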